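/- Fix a finite set $J \subset \mathbb{N}$, an integer $d$ with $1 \le d \le |J|$, and $j \in \mathbb{N} \setminus J$. If $p \in R_{J,d}$ satisfies $\phi_{J,d}(p) = 0$, then $\phi_{J\cup\{j\},\,d+1}(\eta_j(p)) = 0$. In other words, the lift of every syzygy is a syzygy: $\eta_j(\ker \phi_{J,d}) \subseteq \ker \phi_{J\cup\{j\},\,d+1}$. -/

import Mathlib

/-- The polynomial ring `R_{J,d}` over `ℂ` with one variable `X_S` for each `d`-element
subset `S ⊆ J`. -/
abbrev BracketRing (J : Finset ℕ) (d : ℕ) : Type :=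
  MvPolynomial {S : Finset ℕ // S ⊆ J ∧ S.card = d} ℂ

/-- The formal bracket `[λ₁ ⋯ λ_d] ∈ R_{J,d}`: zero if the entries are not pairwise
distinct, and otherwise `sign π • X_{{λ₁,…,λ_d}}` where `π` is the permutation sorting
the list into increasing order. -/
noncomputable def fbr (J : Finset ℕ) (d : ℕ) (lam : Fin d → ℕ) : BracketRing J d :=
  if h : Function.Injective lam ∧ ∀ k, lam k ∈ J then
    have hsub : Finset.image lam Finset.univ ⊆ J := by
      intro x hx
      obtain ⟨k, _, rfl⟩ := Finset.mem_image.mp hx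
      exact h.2 k
    have hcard : (Finset.image lam Finset.univ).card = d := by
      rw [Finset.card_image_of_injective _ h.1, Finset.card_univ, Fintype.card_fin]
    let e := (Finset.image lam Finset.univ).orderIsoOfFin hcard
    let π : Fin d → Fin d := fun k =>
      e.symm ⟨lam k, Finset.mem_image_of_mem _ (Finset.mem_univ k)⟩
    have hπ : Function.Bijective π := by
      apply Finite.injective_iff_bijective.mp
      intro p q hpq
      exact h.1 (congrArg Subtype.val (e.symm.injective hpq))
    ((Equiv.Perm.sign (Equiv.ofBijective π hπ) : ℤ)) •
      MvPolynomial.X ⟨Finset.image lam Finset.univ, hsub, hcard⟩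
  else 0

/-- The lift `η_j : R_{J,d} → R_{J∪{j},d+1}`, sending `X_S` (with
`S = {s₁ < ⋯ < s_d}`) to the formal bracket `[s₁ ⋯ s_d j]`. -/
noncomputable def liftEta (J : Finset ℕ) (d : ℕ) (j : ℕ) :
    BracketRing J d →ₐ[ℂ] BracketRing (insert j J) (d + 1) :=
  MvPolynomial.aeval (fun S : {S : Finset ℕ // S ⊆ J ∧ S.card = d} =>
    fbr (insert j J) (d + 1) (fun k =>
      if h : (k : ℕ) < d then S.1.orderEmbOfFin S.2.2 ⟨(k : ℕ), h⟩ else j))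

/-- The generic coordinatization `φ_{J,d}`, sending `X_S` (with `S = {s₁ < ⋯ < s_d}`) to
the determinant of the `d × d` matrix `(x_{i, s_m})`. -/
noncomputable def genCoord (J : Finset ℕ) (d : ℕ) :
    BracketRing J d →ₐ[ℂ] MvPolynomial (ℕ × ℕ) ℂ :=
  MvPolynomial.aeval (fun S : {S : Finset ℕ // S ⊆ J ∧ S.card = d} =>
    Matrix.det (Matrix.of fun i m : Fin d =>
      MvPolynomial.X ((i : ℕ), (S.1.orderEmbOfFin S.2.2 m : ℕ))))

lemma genCoord_fbr (J : Finset ℕ) (d : ℕ) (lam : Fin d → ℕ)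
    (h : Function.Injective lam ∧ ∀ k, lam k ∈ J) :
    genCoord J d (fbr J d lam) =
      Matrix.det (Matrix.of fun i m : Fin d => MvPolynomial.X ((i : ℕ), lam m)) := by
  rw [fbr, dif_pos h]
  dsimp only
  rw [map_zsmul]
  rw [genCoord, MvPolynomial.aeval_X]
  set T := Finset.image lam Finset.univ with hT
  set σ := Equiv.ofBijective _ _ with hσ
  have key : ∀ m : Fin d, (T.orderEmbOfFin (by
      rw [Finset.card_image_of_injective _ h.1, Finset.card_univ, Fintype.card_fin]) (σ m) : ℕ)
      = lam m := by
    intro m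
    rw [← Finset.coe_orderIsoOfFin_apply]
    exact congrArg Subtype.val
      ((T.orderIsoOfFin _).apply_symm_apply ⟨lam m, Finset.mem_image_of_mem _ (Finset.mem_univ m)⟩)
  have hM : (Matrix.of fun i m : Fin d => MvPolynomial.X (R := ℂ) ((i : ℕ), lam m)) =
      (Matrix.of fun i m : Fin d =>
        MvPolynomial.X (R := ℂ) ((i : ℕ), (T.orderEmbOfFin (by
          rw [Finset.card_image_of_injective _ h.1, Finset.card_univ, Fintype.card_fin]) m : ℕ))).submatrix
        id σ := by
    ext i m
    simp [Matrix.submatrix, key m]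
  rw [hM, Matrix.det_permute', zsmul_eq_mul]

lemma det_lift_aux {F : Type*} [Field F] (d : ℕ) (hd : 1 ≤ d) (x : ℕ → ℕ → F)
    (s : Fin d → ℕ) (j : ℕ) (hu : x d j ≠ 0) :
    Matrix.det (Matrix.of fun i m : Fin (d + 1) =>
        x i (if h : (m : ℕ) < d then s ⟨(m : ℕ), h⟩ else j)) =
      Matrix.det (Matrix.of fun i m : Fin d =>
        (if (i : ℕ) = 0 then x d j else 1) *
          (x i (s m) - x i j * (x d j)⁻¹ * x d (s m))) := by
  haveI : NeZero d := ⟨by omega⟩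
  set A : Matrix (Fin d) (Fin d) F := Matrix.of fun i m => x i (s m) with hA
  set B : Matrix (Fin d) (Fin 1) F := Matrix.of fun i _ => x i j with hB
  set C : Matrix (Fin 1) (Fin d) F := Matrix.of fun _ m => x d (s m) with hC
  set D : Matrix (Fin 1) (Fin 1) F := Matrix.of fun _ _ => x d j with hD
  letI : Invertible D := ⟨Matrix.of (fun _ _ => (x d j)⁻¹), by
      ext i m
      fin_cases i; fin_cases m
      simp [hD, Matrix.mul_apply, inv_mul_cancel₀ hu], by
      ext i m
      fin_cases i; fin_cases m
      simp [hD, Matrix.mul_apply, mul_inv_cancel₀ hu]⟩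
  have hblock : (Matrix.fromBlocks A B C D).submatrix finSumFinEquiv.symm finSumFinEquiv.symm =
      (Matrix.of fun i m : Fin (d + 1) =>
        x i (if h : (m : ℕ) < d then s ⟨(m : ℕ), h⟩ else j)) := by
    ext i m
    obtain ⟨i', rfl⟩ := finSumFinEquiv.surjective i
    obtain ⟨m', rfl⟩ := finSumFinEquiv.surjective m
    simp only [Matrix.submatrix_apply, Equiv.symm_apply_apply]
    rcases i' with i | i <;> rcases m' with m | m
    · simp [Matrix.fromBlocks, hA, Fin.is_lt]
    · have : ¬ ((finSumFinEquiv (Sum.inr m : Fin d ⊕ Fin 1) : ℕ) < d) := by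
        simp [finSumFinEquiv_apply_right]
      simp [Matrix.fromBlocks, hB, this]
    · have h1 : (finSumFinEquiv (Sum.inr i : Fin d ⊕ Fin 1) : ℕ) = d := by
        simp [finSumFinEquiv_apply_right, Fin.val_eq_zero]
      simp [Matrix.fromBlocks, hC, Fin.is_lt, h1]
    · have h1 : (finSumFinEquiv (Sum.inr i : Fin d ⊕ Fin 1) : ℕ) = d := by
        simp [finSumFinEquiv_apply_right, Fin.val_eq_zero]
      have : ¬ ((finSumFinEquiv (Sum.inr m : Fin d ⊕ Fin 1) : ℕ) < d) := by
        simp [finSumFinEquiv_apply_right]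
      simp [Matrix.fromBlocks, hD, this, h1]
  rw [← hblock, Matrix.det_submatrix_equiv_self, Matrix.det_fromBlocks₂₂]
  have hdiag : (Matrix.of fun i m : Fin d =>
      (if (i : ℕ) = 0 then x d j else 1) *
        (x i (s m) - x i j * (x d j)⁻¹ * x d (s m))) =
      Matrix.diagonal (fun i : Fin d => if (i : ℕ) = 0 then x d j else 1) *
        (A - B * ⅟D * C) := by
    have hinv : ⅟D = Matrix.of (fun _ _ => (x d j)⁻¹) := rfl
    ext i m
    rw [Matrix.diagonal_mul]
    simp [hA, hB, hC, hinv, Matrix.sub_apply, Matrix.mul_apply, Fin.sum_univ_one]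
  rw [hdiag, Matrix.det_mul, Matrix.det_diagonal, Matrix.det_fin_one]
  have : ∏ i : Fin d, (if (i : ℕ) = 0 then x d j else 1) = x d j := by
    have hc : ∀ i : Fin d, ((i : ℕ) = 0) = (i = (0 : Fin d)) := by
      intro i; apply propext; exact ⟨fun h => Fin.ext (by rw [h]; simp), fun h => by rw [h]; simp⟩
    simp only [hc]
    simp
  rw [this]
  rfl

theorem lift_of_syzygy_is_syzygy (J : Finset ℕ) (d : ℕ) (hd : 1 ≤ d)
    (hJ : d ≤ J.card) (j : ℕ) (hj : j ∉ J)
    (p : BracketRing J d) (hp : genCoord J d p = 0) :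
    genCoord (insert j J) (d + 1) (liftEta J d j p) = 0 := by
  classical
  set F := FractionRing (MvPolynomial (ℕ × ℕ) ℂ) with hF
  let ι : MvPolynomial (ℕ × ℕ) ℂ →+* F := algebraMap _ F
  have hι : Function.Injective ι := IsFractionRing.injective _ _
  set x : ℕ → ℕ → F := fun i k => ι (MvPolynomial.X (i, k)) with hx
  have hu : x d j ≠ 0 := by
    intro h
    have : (MvPolynomial.X ((d : ℕ), j) : MvPolynomial (ℕ × ℕ) ℂ) = 0 := hι (by simpa using h)
    exact MvPolynomial.X_ne_zero _ this
  let v : ℕ × ℕ → F := fun q =>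
    (if q.1 = 0 then x d j else 1) * (x q.1 q.2 - x q.1 j * (x d j)⁻¹ * x d q.2)
  let Θ : MvPolynomial (ℕ × ℕ) ℂ →+* F := MvPolynomial.eval₂Hom (ι.comp MvPolynomial.C) v
  have main : ι.comp ((genCoord (insert j J) (d + 1)).toRingHom.comp
      (liftEta J d j).toRingHom) = Θ.comp (genCoord J d).toRingHom := by
    apply MvPolynomial.ringHom_ext
    · intro r
      simp [Θ, ι, AlgHom.commutes]
    · intro S
      have hmem : ∀ m : Fin d, S.1.orderEmbOfFin S.2.2 m ∈ J :=
        fun m => S.2.1 (Finset.orderEmbOfFin_mem _ _ _)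
      set lam : Fin (d + 1) → ℕ := fun k =>
        if h : (k : ℕ) < d then S.1.orderEmbOfFin S.2.2 ⟨(k : ℕ), h⟩ else j with hlam
      have hinj : Function.Injective lam := by
        intro a b hab
        rcases Nat.lt_or_ge (a : ℕ) d with ha | ha <;> rcases Nat.lt_or_ge (b : ℕ) d with hb | hb
        · rw [hlam] at hab
          simp only [dif_pos ha, dif_pos hb] at hab
          have := (S.1.orderEmbOfFin S.2.2).injective hab
          have := congrArg Fin.val this
          exact Fin.ext this
        · exfalso
          rw [hlam] at hab
          simp only [dif_pos ha, dif_neg (Nat.not_lt.mpr hb)] at hab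
          exact hj (hab ▸ hmem ⟨a, ha⟩)
        · exfalso
          rw [hlam] at hab
          simp only [dif_neg (Nat.not_lt.mpr ha), dif_pos hb] at hab
          exact hj (hab ▸ hmem ⟨b, hb⟩)
        · have ha' : (a : ℕ) = d := by omega
          have hb' : (b : ℕ) = d := by omega
          exact Fin.ext (ha'.trans hb'.symm)
      have hmem' : ∀ k, lam k ∈ insert j J := by
        intro k
        rw [hlam]
        by_cases h : (k : ℕ) < d
        · simp only [dif_pos h]
          exact Finset.mem_insert_of_mem (hmem _)
        · simp only [dif_neg h]
          exact Finset.mem_insert_self _ _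
      have lhs1 : (liftEta J d j) (MvPolynomial.X S) = fbr (insert j J) (d + 1) lam := by
        rw [liftEta, MvPolynomial.aeval_X]
      calc (ι.comp ((genCoord (insert j J) (d + 1)).toRingHom.comp
              (liftEta J d j).toRingHom)) (MvPolynomial.X S)
          = ι ((genCoord (insert j J) (d + 1)) (fbr (insert j J) (d + 1) lam)) := by
            simp [lhs1]
        _ = ι (Matrix.det (Matrix.of fun i m : Fin (d + 1) =>
              MvPolynomial.X ((i : ℕ), lam m))) := by
            rw [genCoord_fbr _ _ _ ⟨hinj, hmem'⟩]
        _ = Matrix.det (Matrix.of fun i m : Fin (d + 1) => x i (lam m)) := by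
            rw [RingHom.map_det]
            rfl
        _ = Matrix.det (Matrix.of fun i m : Fin d =>
              (if (i : ℕ) = 0 then x d j else 1) *
                (x i (S.1.orderEmbOfFin S.2.2 m) - x i j * (x d j)⁻¹ *
                  x d (S.1.orderEmbOfFin S.2.2 m))) := by
            exact det_lift_aux d hd x (fun m => S.1.orderEmbOfFin S.2.2 m) j hu
        _ = (Θ.comp (genCoord J d).toRingHom) (MvPolynomial.X S) := by
            have : (genCoord J d) (MvPolynomial.X S) =
                Matrix.det (Matrix.of fun i m : Fin d =>
                  MvPolynomial.X ((i : ℕ), (S.1.orderEmbOfFin S.2.2 m : ℕ))) := by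
              rw [genCoord, MvPolynomial.aeval_X]
            simp only [RingHom.comp_apply, AlgHom.toRingHom_eq_coe, RingHom.coe_coe]
            rw [this, RingHom.map_det]
            congr 1
            ext i m
            simp [Θ, Matrix.map_apply, v]
  have := congrArg (fun f : MvPolynomial _ ℂ →+* F => f p) main
  simp only [RingHom.comp_apply, AlgHom.toRingHom_eq_coe, RingHom.coe_coe] at this
  rw [hp, map_zero] at this
  exact hι (by simpa using this)
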